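/- With notation as before ($x_n$ defined by Newton's recursion from $y_1,\dots,y_{p+1}$ over $\mathbb{Q}_p$, and $\Phi(y_n) = pt_n$ for $n \le p$, $\Phi(y_{p+1}) = t_{p+1}$), the mod-$p$ reductions of $\Phi(x_n) \in \mathbb{Z}_p[t_1,\dots,t_{p+1}]$ satisfy: $\overline{\Phi(x_n)} = 0$ for $1 \le n \le p-1$, $\overline{\Phi(x_p)} = \overline{t_p}$, and $\overline{\Phi(x_{p+1})} = -\overline{t_{p+1}}$. -/

import Mathlib

open MvPolynomial


section PMP

/-- valuation bound on a rational -/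
def IVal (p : ℕ) (k : ℤ) (q : ℚ) : Prop := q = 0 ∨ k ≤ padicValRat p q

/-- coefficientwise valuation bound -/
def PVal (p : ℕ) (k : ℤ) (f : MvPolynomial ℕ ℚ) : Prop := ∀ m : ℕ →₀ ℕ, IVal p k (coeff m f)

variable {p : ℕ} [hp : Fact p.Prime]

namespace IVal

lemma zero (k : ℤ) : IVal p k 0 := Or.inl rfl

lemma mono {k j : ℤ} {q : ℚ} (hq : IVal p k q) (h : j ≤ k) : IVal p j q :=
  hq.imp id (le_trans h)

lemma add {k : ℤ} {q r : ℚ} (hq : IVal p k q) (hr : IVal p k r) : IVal p k (q + r) := by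
  rcases hq with rfl | hq
  · simpa using hr
  rcases hr with rfl | hr
  · rw [add_zero]; exact Or.inr hq
  by_cases h : q + r = 0
  · exact Or.inl h
  · exact Or.inr (le_trans (le_min hq hr) (padicValRat.min_le_padicValRat_add h))

lemma neg {k : ℤ} {q : ℚ} (hq : IVal p k q) : IVal p k (-q) := by
  rcases hq with rfl | hq
  · simp [IVal]
  · exact Or.inr (by rwa [padicValRat.neg])

lemma mul {k j : ℤ} {q r : ℚ} (hq : IVal p k q) (hr : IVal p j r) : IVal p (k + j) (q * r) := by
  rcases hq with rfl | hq
  · simp [IVal]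
  rcases hr with rfl | hr
  · simp [IVal]
  by_cases h : q = 0
  · simp [h, IVal]
  by_cases h' : r = 0
  · simp [h', IVal]
  · exact Or.inr (by rw [padicValRat.mul h h']; exact add_le_add hq hr)

lemma one : IVal p 0 1 := Or.inr (by simp)

lemma natCast (n : ℕ) : IVal p 0 (n : ℚ) := Or.inr (zero_le_padicValRat_of_nat n)

lemma self : IVal p 1 (p : ℚ) := Or.inr (le_of_eq (padicValRat.self hp.out.one_lt).symm)

lemma inv_nat {n : ℕ} (hn : n ≠ 0) (h : ¬ p ∣ n) : IVal p 0 ((n : ℚ)⁻¹) := by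
  refine Or.inr ?_
  rw [padicValRat.inv, padicValRat.of_nat, padicValNat.eq_zero_of_not_dvd h]
  simp

lemma sum {k : ℤ} {α : Type*} {s : Finset α} {g : α → ℚ} (h : ∀ a ∈ s, IVal p k (g a)) :
    IVal p k (∑ a ∈ s, g a) := by
  classical
  induction s using Finset.induction_on with
  | empty => simpa using zero k
  | insert _ _ hni ih =>
    rw [Finset.sum_insert hni]
    exact (h _ (Finset.mem_insert_self _ _)).add (ih fun a ha => h a (Finset.mem_insert_of_mem ha))

end IVal

namespace PVal

lemma mono {k j : ℤ} {f : MvPolynomial ℕ ℚ} (hf : PVal p k f) (h : j ≤ k) : PVal p j f :=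
  fun m => (hf m).mono h

lemma zero (k : ℤ) : PVal p k (0 : MvPolynomial ℕ ℚ) := fun m => by simp [IVal]

lemma add {k : ℤ} {f g : MvPolynomial ℕ ℚ} (hf : PVal p k f) (hg : PVal p k g) :
    PVal p k (f + g) := fun m => by rw [coeff_add]; exact (hf m).add (hg m)

lemma neg {k : ℤ} {f : MvPolynomial ℕ ℚ} (hf : PVal p k f) : PVal p k (-f) :=
  fun m => by rw [coeff_neg]; exact (hf m).neg

lemma sub {k : ℤ} {f g : MvPolynomial ℕ ℚ} (hf : PVal p k f) (hg : PVal p k g) :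
    PVal p k (f - g) := by rw [sub_eq_add_neg]; exact hf.add hg.neg

lemma mul {k j : ℤ} {f g : MvPolynomial ℕ ℚ} (hf : PVal p k f) (hg : PVal p j g) :
    PVal p (k + j) (f * g) := fun m => by
  rw [coeff_mul]
  exact IVal.sum fun a _ => (hf a.1).mul (hg a.2)

lemma smul {k j : ℤ} {c : ℚ} {f : MvPolynomial ℕ ℚ} (hc : IVal p k c) (hf : PVal p j f) :
    PVal p (k + j) (c • f) := fun m => by
  rw [coeff_smul]; exact hc.mul (hf m)

lemma sum {k : ℤ} {α : Type*} {s : Finset α} {g : α → MvPolynomial ℕ ℚ}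
    (h : ∀ a ∈ s, PVal p k (g a)) : PVal p k (∑ a ∈ s, g a) := fun m => by
  rw [coeff_sum]
  exact IVal.sum fun a ha => h a ha m

lemma C {k : ℤ} {c : ℚ} (hc : IVal p k c) : PVal p k (MvPolynomial.C c) := fun m => by
  rw [coeff_C]
  split
  · exact hc
  · exact IVal.zero k

lemma one : PVal p 0 (1 : MvPolynomial ℕ ℚ) := by
  simpa using C (IVal.one (p := p))

lemma X (i : ℕ) : PVal p 0 (MvPolynomial.X i : MvPolynomial ℕ ℚ) := fun m => by
  rw [coeff_X']
  split
  · exact IVal.one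
  · exact IVal.zero 0

lemma natP : PVal p 1 ((p : MvPolynomial ℕ ℚ)) := by
  have : ((p : MvPolynomial ℕ ℚ)) = MvPolynomial.C ((p : ℚ)) := by
    rw [map_natCast]
  rw [this]
  exact C IVal.self

lemma neg_one_pow (i : ℕ) : PVal p 0 ((-1 : MvPolynomial ℕ ℚ) ^ i) := by
  induction i with
  | zero => simpa using one
  | succ n ih =>
    rw [pow_succ]
    simpa using ih.mul (one.neg)

lemma of_p_mul {k : ℤ} {f : MvPolynomial ℕ ℚ} (h : PVal p (k + 1) ((p : MvPolynomial ℕ ℚ) * f)) :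
    PVal p k f := by
  intro m
  by_cases hc : coeff m f = 0
  · exact Or.inl hc
  have hcoeff : coeff m ((p : MvPolynomial ℕ ℚ) * f) = (p : ℚ) * coeff m f := by
    rw [show ((p : MvPolynomial ℕ ℚ)) = MvPolynomial.C ((p : ℚ)) by rw [map_natCast],
      coeff_C_mul]
  have hp0 : (p : ℚ) ≠ 0 := by exact_mod_cast hp.out.ne_zero
  rcases h m with h0 | h1
  · rw [hcoeff] at h0
    exact absurd ((mul_eq_zero.1 h0).resolve_left hp0) hc
  · rw [hcoeff, padicValRat.mul hp0 hc, padicValRat.self hp.out.one_lt] at h1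
    exact Or.inr (by omega)

end PVal

end PMP

/-- The algebra map `Φ` sending `y_i ↦ p t_i` for `i ≤ p` and `y_{p+1} ↦ t_{p+1}`
(variables indexed by `ℕ`, variable `i` standing for `y_i` resp. `t_i`). -/
noncomputable def Phi (p : ℕ) : MvPolynomial ℕ ℚ →ₐ[ℚ] MvPolynomial ℕ ℚ :=
  MvPolynomial.aeval fun i =>
    if i ≤ p then (p : MvPolynomial ℕ ℚ) * MvPolynomial.X i else MvPolynomial.X i

/-- A polynomial with `p`-integral coefficients reduces to `0` mod `p`:
each coefficient is `0` or has `p`-adic valuation `≥ 1`. -/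
def CoeffsDivP (p : ℕ) (f : MvPolynomial ℕ ℚ) : Prop :=
  ∀ m : ℕ →₀ ℕ, MvPolynomial.coeff m f = 0 ∨ 1 ≤ padicValRat p (MvPolynomial.coeff m f)

lemma cancel_nat (c : ℕ) (hc : (c : ℚ) ≠ 0) (S : MvPolynomial ℕ ℚ) :
    (c : MvPolynomial ℕ ℚ) * ((c : ℚ)⁻¹ • S) = S := by
  rw [smul_eq_C_mul, ← map_natCast (MvPolynomial.C : ℚ →+* MvPolynomial ℕ ℚ) c, ← mul_assoc,
    ← MvPolynomial.C_mul, mul_inv_cancel₀ hc, MvPolynomial.C_1, one_mul]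

lemma neg_one_pow_mul (i : ℕ) (g : MvPolynomial ℕ ℚ) :
    (-1 : MvPolynomial ℕ ℚ) ^ i * g = ((-1 : ℚ)) ^ i • g := by
  rw [smul_eq_C_mul, map_pow, map_neg, map_one]

/-- Mod-`p` reductions of the `Φ(x_n)`: with `x_n` given by Newton's recursion,
`Φ(x_n) ≡ 0 (mod p)` for `1 ≤ n ≤ p-1`, `Φ(x_p) ≡ t_p (mod p)`, and
`Φ(x_{p+1}) ≡ -t_{p+1} (mod p)`. -/
theorem phi_mod_p (p : ℕ) (hp : p.Prime)
    (x : ℕ → MvPolynomial ℕ ℚ)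
    (hx0 : x 0 = 1)
    (hxr : ∀ n, 1 ≤ n → n ≤ p + 1 →
      x n = (n : ℚ)⁻¹ • ∑ i ∈ Finset.range n,
        (-1 : MvPolynomial ℕ ℚ) ^ i * x (n - (i + 1)) * MvPolynomial.X (i + 1)) :
    (∀ n, 1 ≤ n → n ≤ p - 1 → CoeffsDivP p (Phi p (x n))) ∧
    CoeffsDivP p (Phi p (x p) - MvPolynomial.X p) ∧
    CoeffsDivP p (Phi p (x (p + 1)) + MvPolynomial.X (p + 1)) := by
  haveI : Fact p.Prime := ⟨hp⟩
  obtain ⟨q, rfl⟩ : ∃ q, p = q + 1 := ⟨p - 1, by have := hp.two_le; omega⟩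
  have hq1 : 1 ≤ q := by have := hp.two_le; omega
  -- the recursion after applying Phi
  have hψ : ∀ n, 1 ≤ n → n ≤ q + 2 →
      Phi (q+1) (x n) = (n : ℚ)⁻¹ • ∑ i ∈ Finset.range n,
        (-1 : MvPolynomial ℕ ℚ) ^ i * Phi (q+1) (x (n - (i + 1))) *
          (if i + 1 ≤ q + 1 then ((q+1 : ℕ) : MvPolynomial ℕ ℚ) * X (i+1) else X (i+1)) := by
    intro n h1 h2
    rw [hxr n h1 (by omega), map_smul, map_sum]
    refine congrArg _ (Finset.sum_congr rfl fun i _ => ?_)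
    simp only [map_mul, map_pow, map_neg, map_one, Phi, aeval_X]
  -- valuation ≥ 1 for 1 ≤ n ≤ q
  have key1 : ∀ n, 1 ≤ n → n ≤ q → PVal (q+1) 1 (Phi (q+1) (x n)) := by
    intro n
    induction n using Nat.strong_induction_on with
    | _ n ih =>
      intro h1 h2
      rw [hψ n h1 (by omega)]
      have hc : IVal (q+1) 0 ((n : ℚ)⁻¹) :=
        IVal.inv_nat (by omega) (fun h => by have := Nat.le_of_dvd (by omega) h; omega)
      refine (PVal.smul (j := 1) hc (PVal.sum fun i hi => ?_)).mono (by norm_num)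
      have hi' : i < n := Finset.mem_range.1 hi
      rw [if_pos (show i + 1 ≤ q + 1 by omega)]
      have h2' : PVal (q+1) 0 (Phi (q+1) (x (n - (i+1)))) := by
        rcases Nat.eq_zero_or_pos (n - (i+1)) with h | h
        · rw [h, hx0, map_one]; exact PVal.one
        · exact (ih _ (by omega) (by omega) (by omega)).mono (by norm_num)
      exact (((PVal.neg_one_pow i).mul h2').mul ((PVal.natP).mul (PVal.X (i+1)))).mono
        (by norm_num)
  have key1' : ∀ n, n ≤ q → PVal (q+1) 0 (Phi (q+1) (x n)) := by
    intro n hn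
    rcases Nat.eq_zero_or_pos n with rfl | h
    · rw [hx0, map_one]; exact PVal.one
    · exact (key1 n h hn).mono (by norm_num)
  -- the case n = p
  have key2 : PVal (q+1) 1 (Phi (q+1) (x (q+1)) - X (q+1)) := by
    apply PVal.of_p_mul (k := 1)
    rw [mul_sub, hψ (q+1) (by omega) (by omega), cancel_nat _ (by positivity),
      Finset.sum_range_succ, Nat.sub_self, hx0, map_one, mul_one,
      if_pos (le_refl (q+1)), add_sub_assoc]
    refine PVal.add (PVal.sum fun i hi => ?_) ?_
    · have hi' : i < q := Finset.mem_range.1 hi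
      rw [if_pos (show i + 1 ≤ q + 1 by omega)]
      exact (((PVal.neg_one_pow i).mul (key1 _ (by omega) (by omega))).mul
        ((PVal.natP).mul (PVal.X (i+1)))).mono (by norm_num)
    · have hrw : (-1 : MvPolynomial ℕ ℚ) ^ q * (((q+1:ℕ) : MvPolynomial ℕ ℚ) * X (q+1)) -
          ((q+1:ℕ) : MvPolynomial ℕ ℚ) * X (q+1) =
          ((-1 : MvPolynomial ℕ ℚ) ^ q - 1) * (((q+1:ℕ) : MvPolynomial ℕ ℚ) * X (q+1)) := by
        ring
      rw [hrw]
      have h1 : PVal (q+1) 1 ((-1 : MvPolynomial ℕ ℚ) ^ q - 1) := by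
        rcases Nat.even_or_odd q with he | ho
        · rw [he.neg_one_pow, sub_self]; exact PVal.zero 1
        · have h2 : q + 1 = 2 := (Nat.Prime.even_iff hp).1 (Odd.add_one ho)
          have hqe : q = 1 := by omega
          subst hqe
          have hC : ((-1 : MvPolynomial ℕ ℚ)) ^ 1 - 1 = MvPolynomial.C (-((2:ℕ):ℚ)) := by
            rw [map_neg, map_natCast]; norm_num
          rw [hC]
          exact PVal.C ((IVal.self).neg)
      exact (h1.mul ((PVal.natP).mul (PVal.X (q+1)))).mono (by norm_num)
  have hxp : PVal (q+1) 0 (Phi (q+1) (x (q+1))) := by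
    have hre : Phi (q+1) (x (q+1)) = (Phi (q+1) (x (q+1)) - X (q+1)) + X (q+1) := by ring
    rw [hre]
    exact (key2.mono (by norm_num)).add (PVal.X _)
  -- the case n = p + 1
  have key3 : PVal (q+1) 1 (Phi (q+1) (x (q+1+1)) + X (q+1+1)) := by
    have hcne : ((q+1+1 : ℕ) : ℚ) ≠ 0 := by positivity
    have hcinv : IVal (q+1) 0 (((q+1+1 : ℕ) : ℚ)⁻¹) := by
      refine IVal.inv_nat (by omega) (fun h => ?_)
      have h1 := (Nat.dvd_sub h (dvd_refl (q+1)))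
      simp only [show q+1+1 - (q+1) = 1 from by omega] at h1
      have := Nat.le_of_dvd one_pos h1
      omega
    rw [hψ (q+1+1) (by omega) (by omega), Finset.sum_range_succ,
      if_neg (show ¬ (q+1+1 ≤ q+1) by omega), Nat.sub_self, hx0, map_one, mul_one,
      neg_one_pow_mul (q+1) (X (q+1+1)), smul_add, smul_smul, add_assoc, ← one_smul ℚ (X (q+1+1)),
      smul_smul, ← add_smul]
    refine PVal.add ?_ ?_
    · refine (PVal.smul (j := 1) hcinv (PVal.sum fun i hi => ?_)).mono (by norm_num)
      have hi' : i < q + 1 := Finset.mem_range.1 hi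
      rw [if_pos (show i + 1 ≤ q + 1 by omega)]
      have hmid : PVal (q+1) 0 (Phi (q+1) (x (q+1+1 - (i+1)))) := by
        rcases Nat.eq_zero_or_pos i with rfl | hi1
        · simpa using hxp
        · exact key1' _ (by omega)
      exact (((PVal.neg_one_pow i).mul hmid).mul ((PVal.natP).mul (PVal.X (i+1)))).mono
        (by norm_num)
    · have hd : IVal (q+1) 1 (((q+1+1:ℕ):ℚ)⁻¹ * (-1:ℚ)^(q+1) * 1 + 1) := by
        have he : IVal (q+1) 1 ((-1:ℚ)^(q+1) + ((q+1+1:ℕ):ℚ)) := by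
          rcases Nat.even_or_odd (q+1) with he | ho
          · have h2 : q + 1 = 2 := (Nat.Prime.even_iff hp).1 he
            have hqe : q = 1 := by omega
            subst hqe
            have : ((-1:ℚ))^(1+1) + ((1+1+1:ℕ):ℚ) = ((1+1:ℕ):ℚ) * ((1+1:ℕ):ℚ) := by
              norm_num
            rw [this]
            exact ((IVal.self).mul (IVal.self)).mono (by norm_num)
          · rw [ho.neg_one_pow]
            have : (-1:ℚ) + ((q+1+1:ℕ):ℚ) = ((q+1:ℕ):ℚ) := by push_cast; ring
            rw [this]
            exact IVal.self
        have heq : ((q+1+1:ℕ):ℚ)⁻¹ * (-1:ℚ)^(q+1) * 1 + 1 =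
            ((q+1+1:ℕ):ℚ)⁻¹ * ((-1:ℚ)^(q+1) + ((q+1+1:ℕ):ℚ)) := by
          rw [mul_one, mul_add, inv_mul_cancel₀ hcne]
        rw [heq]
        exact (hcinv.mul he).mono (by norm_num)
      exact (PVal.smul (k := 1) (j := 0) hd (PVal.X (q+1+1))).mono (by norm_num)
  exact ⟨fun n h1 h2 => key1 n h1 (by omega), key2, key3⟩
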